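/- Let n ≥ 2 and k ≥ 1 be integers with k dividing n, and set m = n/k. For the cluster C = { i·m : i = 1,…,k } consisting of the largest position of each of the k consecutive blocks of m positions, EMD(C) = (n−k) / (2·(n−1)·k); i.e., the upper bound (n−k)/(2(n−1)k) for clusters containing one record per block is also attained by the cluster of block maxima. -/

import Mathlib

/-- The Earth Mover's Distance (with the ordered distance) between the uniform
distribution on a cluster `C ⊆ {1,…,n}` of `k` records and the uniform
distribution on the whole data set `{1,…,n}`. -/
noncomputable def EMD (n k : ℕ) (C : Finset ℕ) : ℝ :=
  (1 / ((n : ℝ) - 1)) * ∑ i ∈ Finset.Icc 1 n,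
    |∑ j ∈ Finset.Icc 1 i, ((if j ∈ C then (1 : ℝ) / k else 0) - 1 / n)|

/-- If `k ∣ n` and `m = n/k`, the cluster consisting of the largest position
`im` of each of the `k` consecutive blocks of `m` positions attains the
upper bound: its EMD equals `(n−k)/(2(n−1)k)`. -/
theorem emd_upper_bound_attained_maxima (n k m : ℕ) (hn : 2 ≤ n) (hk : 1 ≤ k)
    (hdvd : k ∣ n) (hm : m = n / k)
    (C : Finset ℕ)
    (hC : C = (Finset.Icc 1 k).image (fun i => i * m)) :
    EMD n k C = ((n : ℝ) - k) / (2 * ((n : ℝ) - 1) * k) := by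
  have hnm : n = k * m := by rw [hm, Nat.mul_div_cancel' hdvd]
  have hm1 : 1 ≤ m := by
    rcases Nat.eq_zero_or_pos m with h | h
    · subst h; simp at hnm; omega
    · exact h
  have hm0 : 0 < m := hm1
  have hkR : (k : ℝ) ≠ 0 := by positivity
  have hnR : (n : ℝ) ≠ 0 := by positivity
  have hn1 : (n : ℝ) - 1 ≠ 0 := by
    have : (2 : ℝ) ≤ n := by exact_mod_cast hn
    linarith
  -- per-term identity
  have hterm : ∀ i ∈ Finset.Icc 1 n,
      |∑ j ∈ Finset.Icc 1 i, ((if j ∈ C then (1 : ℝ) / k else 0) - 1 / n)|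
        = ((i % m : ℕ) : ℝ) / n := by
    intro i hi
    rw [Finset.mem_Icc] at hi
    have hin : i ≤ k * m := hnm ▸ hi.2
    -- count of cluster points up to i
    have hcard : (Finset.Icc 1 i ∩ C).card = i / m := by
      rw [hC]
      have heq : Finset.Icc 1 i ∩ (Finset.Icc 1 k).image (fun j => j * m)
          = (Finset.Icc 1 (i / m)).image (fun j => j * m) := by
        ext x
        simp only [Finset.mem_inter, Finset.mem_Icc, Finset.mem_image]
        constructor
        · rintro ⟨⟨hx1, hx2⟩, j, ⟨hj1, hj2⟩, rfl⟩
          exact ⟨j, ⟨hj1, (Nat.le_div_iff_mul_le hm0).mpr hx2⟩, rfl⟩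
        · rintro ⟨j, ⟨hj1, hj2⟩, rfl⟩
          have hji : j * m ≤ i := (Nat.le_div_iff_mul_le hm0).mp hj2
          have hjk : j ≤ k := by
            calc j ≤ i / m := hj2
            _ ≤ (k * m) / m := Nat.div_le_div_right hin
            _ = k := Nat.mul_div_cancel k hm0
          exact ⟨⟨Nat.one_le_iff_ne_zero.mpr (by positivity), hji⟩, j, ⟨hj1, hjk⟩, rfl⟩
      rw [heq, Finset.card_image_of_injective _
        (fun a b h => Nat.eq_of_mul_eq_mul_right hm0 h), Nat.card_Icc]
      simp
    have hsum1 : ∑ j ∈ Finset.Icc 1 i, (if j ∈ C then (1 : ℝ) / k else 0)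
        = ((i / m : ℕ) : ℝ) * (1 / k) := by
      rw [Finset.sum_ite_mem, Finset.sum_const, hcard, nsmul_eq_mul]
    have hsum2 : ∑ j ∈ Finset.Icc 1 i, ((1 : ℝ) / n) = (i : ℝ) * (1 / n) := by
      rw [Finset.sum_const, Nat.card_Icc, nsmul_eq_mul]
      norm_num
    rw [Finset.sum_sub_distrib, hsum1, hsum2]
    have hiR : (i : ℝ) = m * ((i / m : ℕ) : ℝ) + ((i % m : ℕ) : ℝ) := by
      exact_mod_cast (Nat.div_add_mod i m).symm
    have hnmR : (n : ℝ) = k * m := by exact_mod_cast hnm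
    have hmR : (m : ℝ) ≠ 0 := by positivity
    have key : ((i / m : ℕ) : ℝ) * (1 / k) - (i : ℝ) * (1 / n)
        = -(((i % m : ℕ) : ℝ) / n) := by
      rw [hiR, hnmR]
      field_simp
      ring
    rw [key, abs_neg, abs_of_nonneg (by positivity)]
  -- sum of residues
  have hres : ∑ i ∈ Finset.Icc 1 n, (i % m) = k * ∑ i ∈ Finset.range m, i := by
    have hA : ∀ K : ℕ, ∑ i ∈ Finset.range (K * m), (i % m)
        = K * ∑ i ∈ Finset.range m, i := by
      intro K
      induction K with
      | zero => simp
      | succ K ih =>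
        rw [Nat.succ_mul, Finset.sum_range_add, ih]
        have : ∑ i ∈ Finset.range m, (K * m + i) % m = ∑ i ∈ Finset.range m, i := by
          apply Finset.sum_congr rfl
          intro i hi
          rw [add_comm, Nat.add_mul_mod_self_right,
            Nat.mod_eq_of_lt (Finset.mem_range.mp hi)]
        rw [this]; ring
    have h0 : Finset.range (n + 1) = insert 0 (Finset.Icc 1 n) := by
      ext x; simp [Finset.mem_Icc, Finset.mem_range]; omega
    have h1 : ∑ i ∈ Finset.range (n + 1), (i % m)
        = ∑ i ∈ Finset.Icc 1 n, (i % m) := by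
      rw [h0, Finset.sum_insert (by simp)]
      simp
    have h2 : n % m = 0 := hnm ▸ Nat.mul_mod_left k m
    rw [← h1, Finset.sum_range_succ, h2, add_zero, hnm, hA]
  -- Gauss sum
  have hG : (2 : ℝ) * ((∑ i ∈ Finset.range m, i : ℕ) : ℝ) = (m : ℝ) * ((m : ℝ) - 1) := by
    have := Finset.sum_range_id_mul_two m
    have h' : ((∑ i ∈ Finset.range m, i) * 2 : ℕ) = (m * (m - 1) : ℕ) := this
    have : ((∑ i ∈ Finset.range m, i : ℕ) : ℝ) * 2 = (m : ℝ) * (((m - 1 : ℕ)) : ℝ) := by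
      exact_mod_cast congrArg (Nat.cast : ℕ → ℝ) h'
    rw [Nat.cast_sub hm1] at this
    push_cast at this ⊢
    linarith
  -- assemble
  rw [EMD, Finset.sum_congr rfl hterm, ← Finset.sum_div]
  have hS : ∑ i ∈ Finset.Icc 1 n, ((i % m : ℕ) : ℝ)
      = (k : ℝ) * ((∑ i ∈ Finset.range m, i : ℕ) : ℝ) := by
    rw [← Nat.cast_sum]
    exact_mod_cast congrArg (Nat.cast : ℕ → ℝ) hres
  rw [hS]
  have hnmR : (n : ℝ) = k * m := by exact_mod_cast hnm
  rw [hnmR] at hn1 ⊢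
  push_cast at hG ⊢
  field_simp
  linear_combination hG
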